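/- Let c > 0, a > 0, b ∈ ℝ, and b_μ: (0,∞) → (0,∞) continuous, surjective, strictly decreasing. If b_μ(s) ~ c·(1/s)^a·(log(1/s))^b as s → 0, then its inverse satisfies b_μ^{-1}(R) ~ c^{1/a}·a^{-b/a}·R^{-1/a}·(log R)^{b/a} as R → ∞. -/

import Mathlib

open Filter Set

/-- Inversion of sharp small-ball asymptotics: if `b_μ(s) ~ c (1/s)^a (log(1/s))^b` as
`s → 0+`, then `b_μ^{-1}(R) ~ c^{1/a} a^{-b/a} R^{-1/a} (log R)^{b/a}` as `R → ∞`. -/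
theorem stmt_10 (bμ binv : ℝ → ℝ) (c a b : ℝ) (hc : 0 < c) (ha : 0 < a)
    (hcont : ContinuousOn bμ (Ioi 0)) (hanti : StrictAntiOn bμ (Ioi 0))
    (hsurj : SurjOn bμ (Ioi 0) (Ioi 0)) (hmaps : MapsTo bμ (Ioi 0) (Ioi 0))
    (hinv1 : ∀ s ∈ Ioi (0:ℝ), binv (bμ s) = s)
    (hinv2 : ∀ R ∈ Ioi (0:ℝ), bμ (binv R) = R)
    (hinvmaps : MapsTo binv (Ioi 0) (Ioi 0))
    (hasym : Tendsto (fun s => bμ s / (c * (1 / s) ^ a * (Real.log (1 / s)) ^ b))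
      (nhdsWithin 0 (Ioi 0)) (nhds 1)) :
    Tendsto (fun R => binv R /
        (c ^ (1 / a) * a ^ (-(b / a)) * R ^ (-(1 / a)) * (Real.log R) ^ (b / a)))
      atTop (nhds 1) := by
  have ha' : a ≠ 0 := ha.ne'
  set l := nhdsWithin (0:ℝ) (Ioi 0) with hl
  set L : ℝ → ℝ := fun s => Real.log (1 / s) with hLdef
  set φ : ℝ → ℝ := fun s => c * (1 / s) ^ a * (L s) ^ b with hφdef
  set r : ℝ → ℝ := fun s => bμ s / φ s with hrdef
  have hasym' : Tendsto r l (nhds 1) := by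
    simp only [hrdef, hφdef, hLdef]
    exact hasym
  -- L → atTop along l
  have hLtop : Tendsto L l atTop := by
    have h1 : Tendsto (fun s : ℝ => 1 / s) l atTop := by
      simpa [one_div] using tendsto_inv_nhdsGT_zero (𝕜 := ℝ)
    exact Real.tendsto_log_atTop.comp h1
  -- eventual facts
  have Epos : ∀ᶠ s in l, 0 < s := eventually_mem_nhdsWithin
  have EL : ∀ᶠ s in l, 1 < L s := hLtop.eventually (eventually_gt_atTop 1)
  have Er : ∀ᶠ s in l, (1:ℝ)/2 < r s := hasym'.eventually (eventually_gt_nhds (by norm_num))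
  have Ebμ : ∀ᶠ s in l, 0 < bμ s := Epos.mono fun s hs => hmaps hs
  have Eφ : ∀ᶠ s in l, 0 < φ s := by
    filter_upwards [Epos, EL] with s hs hL1
    have h1s : 0 < (1:ℝ)/s := by positivity
    have hLpos : (0:ℝ) < L s := lt_trans one_pos hL1
    exact mul_pos (mul_pos hc (Real.rpow_pos_of_pos h1s a)) (Real.rpow_pos_of_pos hLpos b)
  -- bμ s = r s * φ s eventually
  have Ebr : ∀ᶠ s in l, bμ s = r s * φ s := by
    filter_upwards [Eφ] with s hφs
    rw [hrdef]
    field_simp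
  -- q := log (bμ s) / (a * L s) → 1
  have hq : Tendsto (fun s => Real.log (bμ s) / (a * L s)) l (nhds 1) := by
    have haL : Tendsto (fun s => a * L s) l atTop := Tendsto.const_mul_atTop ha hLtop
    have hinvaL : Tendsto (fun s => (a * L s)⁻¹) l (nhds 0) := tendsto_inv_atTop_zero.comp haL
    have t1 : Tendsto (fun s => Real.log (r s) * (a * L s)⁻¹) l (nhds 0) := by
      have hlogr : Tendsto (fun s => Real.log (r s)) l (nhds 0) := by
        have := (Real.continuousAt_log one_ne_zero).tendsto.comp hasym'
        simpa [Function.comp_def] using this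
      simpa using hlogr.mul hinvaL
    have t2 : Tendsto (fun s => Real.log c * (a * L s)⁻¹) l (nhds 0) := by
      simpa using hinvaL.const_mul (Real.log c)
    have t4 : Tendsto (fun s => (b / a) * (Real.log (L s) / L s)) l (nhds 0) := by
      have h0 : Tendsto (fun x : ℝ => Real.log x / x) atTop (nhds 0) :=
        Real.isLittleO_log_id_atTop.tendsto_div_nhds_zero
      simpa using ((h0.comp hLtop).const_mul (b / a))
    have hsum : Tendsto (fun s => Real.log (r s) * (a * L s)⁻¹ + Real.log c * (a * L s)⁻¹
        + (b / a) * (Real.log (L s) / L s) + 1) l (nhds 1) := by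
      have := ((t1.add t2).add t4).add (tendsto_const_nhds (x := (1:ℝ)))
      simpa using this
    refine hsum.congr' ?_
    filter_upwards [Epos, EL, Er, Ebr] with s hs hL1 hr2 hbr
    have hLpos : (0:ℝ) < L s := lt_trans one_pos hL1
    have hrpos : (0:ℝ) < r s := lt_trans (by norm_num) hr2
    have h1s : (0:ℝ) < 1/s := by positivity
    have hlogb : Real.log (bμ s)
        = Real.log (r s) + Real.log c + a * L s + b * Real.log (L s) := by
      rw [hbr, hφdef]
      simp only
      rw [Real.log_mul (by positivity) (by positivity),
          Real.log_mul (by positivity) (by positivity),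
          Real.log_mul (by positivity) (by positivity),
          Real.log_rpow h1s, Real.log_rpow hLpos]
      ring
    rw [hlogb]
    have haLne : a * L s ≠ 0 := by positivity
    field_simp
    ring
  -- positivity of log (bμ s) eventually
  have Eq2 : ∀ᶠ s in l, (1:ℝ)/2 < Real.log (bμ s) / (a * L s) :=
    hq.eventually (eventually_gt_nhds (by norm_num))
  have Elogb : ∀ᶠ s in l, 0 < Real.log (bμ s) := by
    filter_upwards [EL, Eq2] with s hL1 hq2
    have hLpos : (0:ℝ) < L s := lt_trans one_pos hL1
    have haL : (0:ℝ) < a * L s := by positivity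
    have := mul_lt_mul_of_pos_right hq2 haL
    rw [div_mul_cancel₀ _ haL.ne'] at this
    linarith
  -- the key function g and its limit
  have hG : Tendsto (fun s => s / (c ^ (1/a) * a ^ (-(b/a)) * (bμ s) ^ (-(1/a))
      * (Real.log (bμ s)) ^ (b/a))) l (nhds 1) := by
    have hrp : Tendsto (fun s => (r s) ^ (1/a)) l (nhds 1) := by
      have hcont1 : ContinuousAt (fun x : ℝ => x ^ (1/a)) 1 :=
        Real.continuousAt_rpow_const 1 (1/a) (Or.inl one_ne_zero)
      have := hcont1.tendsto.comp hasym'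
      simpa [Real.one_rpow, Function.comp_def] using this
    have hqp : Tendsto (fun s => ((a * L s) / Real.log (bμ s)) ^ (b/a)) l (nhds 1) := by
      have hqi : Tendsto (fun s => (a * L s) / Real.log (bμ s)) l (nhds 1) := by
        have := (hq.inv₀ one_ne_zero)
        simpa [inv_div] using this
      have hcont1 : ContinuousAt (fun x : ℝ => x ^ (b/a)) 1 :=
        Real.continuousAt_rpow_const 1 (b/a) (Or.inl one_ne_zero)
      have := hcont1.tendsto.comp hqi
      simpa [Real.one_rpow, Function.comp_def] using this
    have hmul : Tendsto (fun s => (r s) ^ (1/a)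
        * ((a * L s) / Real.log (bμ s)) ^ (b/a)) l (nhds 1) := by
      simpa using hrp.mul hqp
    refine hmul.congr' ?_
    filter_upwards [Epos, EL, Er, Ebr, Elogb] with s hs hL1 hr2 hbr hlogb
    have hLpos : (0:ℝ) < L s := lt_trans one_pos hL1
    have hrpos : (0:ℝ) < r s := lt_trans (by norm_num) hr2
    have h1s : (0:ℝ) < 1/s := by positivity
    -- compute (bμ s) ^ (-(1/a))
    have hbpow : (bμ s) ^ (-(1/a))
        = (r s) ^ (-(1/a)) * c ^ (-(1/a)) * s * (L s) ^ (-(b/a)) := by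
      rw [hbr, hφdef]
      simp only
      rw [Real.mul_rpow (by positivity) (by positivity),
          Real.mul_rpow (by positivity) (by positivity),
          Real.mul_rpow (by positivity) (by positivity)]
      have h1 : ((1/s) ^ a) ^ (-(1/a)) = s := by
        rw [← Real.rpow_mul h1s.le]
        have : a * -(1/a) = -1 := by field_simp
        rw [this, Real.rpow_neg_one, one_div, inv_inv]
      have h2 : ((L s) ^ b) ^ (-(1/a)) = (L s) ^ (-(b/a)) := by
        rw [← Real.rpow_mul hLpos.le]
        congr 1
        field_simp
      rw [h1, h2]
      ring
    have hrhs : ((a * L s) / Real.log (bμ s)) ^ (b/a)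
        = a ^ (b/a) * (L s) ^ (b/a) * ((Real.log (bμ s)) ^ (b/a))⁻¹ := by
      rw [div_eq_mul_inv, Real.mul_rpow (by positivity) (by positivity),
          Real.mul_rpow (by positivity) (by positivity), Real.inv_rpow hlogb.le]
    rw [hbpow, hrhs, Real.rpow_neg hrpos.le, Real.rpow_neg hc.le, Real.rpow_neg hLpos.le,
        Real.rpow_neg ha.le]
    have h1 := (Real.rpow_pos_of_pos hrpos (1/a)).ne'
    have h2 := (Real.rpow_pos_of_pos hc (1/a)).ne'
    have h3 := (Real.rpow_pos_of_pos hLpos (b/a)).ne'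
    have h4 := (Real.rpow_pos_of_pos ha (b/a)).ne'
    have h5 := (Real.rpow_pos_of_pos hlogb (b/a)).ne'
    field_simp
  -- binv tends to 0 from the right
  have hbinv0 : Tendsto binv atTop l := by
    rw [hl, (nhdsGT_basis (0:ℝ)).tendsto_right_iff]
    intro ε hε
    filter_upwards [eventually_gt_atTop (max (bμ ε) 0)] with R hR
    have hR0 : (0:ℝ) < R := lt_of_le_of_lt (le_max_right _ _) hR
    have hbinvR : binv R ∈ Ioi (0:ℝ) := hinvmaps hR0
    refine ⟨hbinvR, ?_⟩
    by_contra h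
    push_neg at h
    have hle : bμ (binv R) ≤ bμ ε := hanti.antitoneOn hε hbinvR h
    rw [hinv2 R hR0] at hle
    exact absurd hle (not_le.mpr (lt_of_le_of_lt (le_max_left _ _) hR))
  -- conclude
  have hfinal := hG.comp hbinv0
  refine hfinal.congr' ?_
  filter_upwards [eventually_gt_atTop (0:ℝ)] with R hR
  simp only [Function.comp]
  rw [hinv2 R hR]
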